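/- For n, p, q ≥ 0, in the exterior algebras Λ_n over ℝ on generators ε_0,…,ε_n, with cofaces d^i : Λ_{n−1} → Λ_n the ℝ-algebra homomorphisms given by d^i(ε_k) = ε_k for k < i and d^i(ε_k) = ε_{k+1} for k ≥ i, and with Δ_n = (ε_1 − ε_0)⋯(ε_n − ε_{n−1}), π_n = ε_0⋯ε_n, and cup product f ∪ g = (d^{p+1})^q(f) · (d^0)^p(g) for f ∈ Λ_p, g ∈ Λ_q, the following identities hold: (1) ε_i · Δ_n = π_n for every 0 ≤ i ≤ n; (2) Σ_{i=0}^{n} (−1)^i d^i(π_{n−1}) = Δ_n for every n ≥ 1; (3) Δ_p ∪ Δ_q = Δ_{p+q}; (4) π_p ∪ Δ_q = π_{p+q}; (5) π_p ∪ π_q = 0. -/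

import Mathlib

/-! Statement 18: the structure relations among `Δ_n`, `π_n`, the cofaces and the cup product
in the cochains of the nerve of the pair groupoid of the odd line. -/

noncomputable section

/-- `Λ_n`: the exterior algebra over `ℝ` on the generators `ε_0, …, ε_n`. -/
abbrev Lam (n : ℕ) := ExteriorAlgebra ℝ (Fin (n + 1) → ℝ)

/-- The generator `ε_i ∈ Λ_n`. -/
def eps (n : ℕ) (i : Fin (n + 1)) : Lam n := ExteriorAlgebra.ι ℝ (Pi.single i 1)

/-- The algebra homomorphism `Λ_a → Λ_b` sending `ε_i ↦ ε_{g i}`. -/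
def genMap {a b : ℕ} (g : Fin (a + 1) → Fin (b + 1)) : Lam a →ₐ[ℝ] Lam b :=
  ExteriorAlgebra.lift ℝ
    ⟨(ExteriorAlgebra.ι ℝ).comp
        (∑ i : Fin (a + 1),
          (LinearMap.single ℝ (fun _ : Fin (b + 1) => ℝ) (g i)).comp (LinearMap.proj i)),
      fun m => ExteriorAlgebra.ι_sq_zero _⟩

/-- The codegeneracy `s^j : Λ_{m+1} → Λ_m` (`0 ≤ j ≤ m`): `s^j(ε_i) = ε_i` for `i ≤ j` and
`s^j(ε_i) = ε_{i-1}` for `i > j`. -/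
def sdeg (m : ℕ) (j : Fin (m + 1)) : Lam (m + 1) →ₐ[ℝ] Lam m :=
  genMap (fun i : Fin (m + 2) => Fin.predAbove j i)

/-- `Δ_n = (ε_1 - ε_0)(ε_2 - ε_1) ⋯ (ε_n - ε_{n-1}) ∈ Λ_n`. -/
def Delta (n : ℕ) : Lam n :=
  ((List.finRange n).map (fun i : Fin n => eps n i.succ - eps n i.castSucc)).prod

/-- `π_n = ε_0 ε_1 ⋯ ε_n ∈ Λ_n`. -/
def piTop (n : ℕ) : Lam n :=
  ((List.finRange (n + 1)).map (fun i => eps n i)).prod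

/-- The coface `d^i : Λ_n → Λ_{n+1}`: `d^i(ε_l) = ε_l` for `l < i` and `ε_{l+1}` for `l ≥ i`. -/
def dcoface (n : ℕ) (i : Fin (n + 2)) : Lam n →ₐ[ℝ] Lam (n + 1) :=
  genMap (fun l : Fin (n + 1) => Fin.succAbove i l)

/-- The iterate `(d^i)^q : Λ_p → Λ_{p+q}` (the coface index `i` is fixed; it is clamped into
range, which does not affect the values used below since there `i ≤ p + 1`). -/
def dIter (i : ℕ) : (p q : ℕ) → Lam p → Lam (p + q)
  | _, 0, x => x
  | p, q + 1, x => dcoface (p + q) ⟨min i (p + q + 1), by omega⟩ (dIter i p q x)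

/-- Cast along an equality of degrees. -/
def lcast {a b : ℕ} (h : a = b) (x : Lam a) : Lam b := h ▸ x

/-- The cup product `f ∪ g = (d^{p+1})^q(f) · (d^0)^p(g)` for `f ∈ Λ_p`, `g ∈ Λ_q`. -/
def cup (p q : ℕ) (f : Lam p) (g : Lam q) : Lam (p + q) :=
  dIter (p + 1) p q f * lcast (Nat.add_comm q p) (dIter 0 q p g)

def gen (n j : ℕ) : Lam n :=
  ExteriorAlgebra.ι ℝ (fun t : Fin (n+1) => if (t:ℕ) = j then 1 else 0)

lemma gen_anticomm (n a b : ℕ) : gen n a * gen n b = -(gen n b * gen n a) :=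
  eq_neg_of_add_eq_zero_left (ExteriorAlgebra.ι_add_mul_swap _ _)

lemma gen_sq (n a : ℕ) : gen n a * gen n a = 0 := ExteriorAlgebra.ι_sq_zero _

def gp (n : ℕ) (l : List ℕ) : Lam n := (l.map (gen n)).prod

@[simp] lemma gp_nil (n : ℕ) : gp n [] = 1 := rfl
@[simp] lemma gp_cons (n a : ℕ) (l : List ℕ) : gp n (a :: l) = gen n a * gp n l := by
  simp [gp]
@[simp] lemma gp_append (n : ℕ) (l₁ l₂ : List ℕ) :
    gp n (l₁ ++ l₂) = gp n l₁ * gp n l₂ := by simp [gp]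

lemma gen_mul_gp_of_mem {n j : ℕ} {l : List ℕ} (h : j ∈ l) : gen n j * gp n l = 0 := by
  induction l with
  | nil => simp at h
  | cons a l ih =>
    rw [gp_cons, ← mul_assoc]
    rcases List.mem_cons.mp h with h | h
    · rw [h, gen_sq, zero_mul]
    · rw [gen_anticomm, neg_mul, mul_assoc, ih h, mul_zero, neg_zero]

lemma gen_mul_gp (n j : ℕ) (l : List ℕ) :
    gen n j * gp n l = ((-1 : ℝ) ^ l.length) • (gp n l * gen n j) := by
  induction l with
  | nil => simp
  | cons a l ih =>
    rw [gp_cons, ← mul_assoc, gen_anticomm, neg_mul, mul_assoc, ih]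
    rw [mul_smul_comm]
    simp only [List.length_cons, pow_succ, mul_smul]
    rw [neg_one_smul, smul_neg, mul_assoc]

lemma gp_mul_gen_of_mem {n j : ℕ} {l : List ℕ} (h : j ∈ l) : gp n l * gen n j = 0 := by
  have h1 := gen_mul_gp n j l
  rw [gen_mul_gp_of_mem h] at h1
  have := h1.symm
  rcases smul_eq_zero.mp this with h2 | h2
  · exact absurd h2 (by positivity)
  · exact h2

/-- Partial `Δ`-type products with a shift `s`. -/
def SDl (n s k : ℕ) : Lam n :=
  ((List.range k).map (fun j => gen n (s+j+1) - gen n (s+j))).prod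

def Dl (n k : ℕ) : Lam n :=
  ((List.range k).map (fun j => gen n (j+1) - gen n j)).prod

lemma Dl_eq_SDl (n k : ℕ) : Dl n k = SDl n 0 k := by
  simp [Dl, SDl, Nat.zero_add]

@[simp] lemma SDl_zero (n s : ℕ) : SDl n s 0 = 1 := by simp [SDl]

lemma SDl_succ (n s k : ℕ) :
    SDl n s (k+1) = SDl n s k * (gen n (s+k+1) - gen n (s+k)) := by
  rw [SDl, List.range_succ, List.map_append, List.prod_append]
  simp [SDl]

lemma Dl_succ (n k : ℕ) : Dl n (k+1) = Dl n k * (gen n (k+1) - gen n k) := by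
  rw [Dl, List.range_succ, List.map_append, List.prod_append]
  simp [Dl]

/-- The list `0, …, i-1, i+1, …, i+m`. -/
def Ql (i m : ℕ) : List ℕ := List.range i ++ (List.range m).map (fun j => i+1+j)

lemma range_succ_eq (k : ℕ) : List.range (k+1) = List.range k ++ [k] := by
  rw [List.range_succ]

lemma Ql_succ {i k : ℕ} (h : i ≤ k) : Ql i (k+1-i) = Ql i (k-i) ++ [k+1] := by
  have h1 : k+1-i = (k-i)+1 := by omega
  rw [Ql, Ql, h1, range_succ_eq, List.map_append, List.append_assoc]
  congr 2
  simp; omega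

lemma mem_Ql_of_lt {i k : ℕ} (h : i < k) : k ∈ Ql i (k-i) := by
  rw [Ql, List.mem_append]
  right
  simp only [List.mem_map, List.mem_range]
  exact ⟨k-i-1, by omega, by omega⟩

/-- Expansion of `Δ` as an alternating sum of "omit one" products. -/
lemma Dl_expand (n k : ℕ) :
    Dl n k = ∑ i ∈ Finset.range (k+1), ((-1:ℝ)^i) • gp n (Ql i (k-i)) := by
  induction k with
  | zero => simp [Dl, Ql]
  | succ k ih =>
    rw [Dl_succ, ih, Finset.sum_mul]
    have key : ∀ i ∈ Finset.range (k+1),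
        ((-1:ℝ)^i • gp n (Ql i (k-i))) * (gen n (k+1) - gen n k)
        = (-1:ℝ)^i • gp n (Ql i (k+1-i))
          - (-1:ℝ)^i • (gp n (Ql i (k-i)) * gen n k) := by
      intro i hi
      have hik : i ≤ k := by have := Finset.mem_range.mp hi; omega
      rw [smul_mul_assoc, mul_sub, Ql_succ hik]
      rw [gp_append]
      simp [smul_sub]
    rw [Finset.sum_congr rfl key, Finset.sum_sub_distrib]
    have h2 : ∑ i ∈ Finset.range (k+1), (-1:ℝ)^i • (gp n (Ql i (k-i)) * gen n k)
        = (-1:ℝ)^k • gp n (Ql (k+1) (k+1-(k+1))) := by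
      rw [Finset.sum_eq_single k]
      · have e : Ql (k+1) (k+1-(k+1)) = Ql k (k-k) ++ [k] := by
          simp [Ql, Nat.sub_self, range_succ_eq]
        rw [e, gp_append]
        simp [gp]
      · intro i hi hne
        have : i < k := by have := Finset.mem_range.mp hi; omega
        rw [gp_mul_gen_of_mem (mem_Ql_of_lt this), smul_zero]
      · intro h; simp at h
    rw [h2]
    conv_rhs => rw [Finset.sum_range_succ]
    rw [pow_succ, mul_neg_one, neg_smul, sub_eq_add_neg]

lemma range_add_eq (a b : ℕ) :
    List.range (a+b) = List.range a ++ (List.range b).map (fun j => a+j) :=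
  List.range_add

/-- `ε_i Δ = π` (core form). -/
lemma gen_mul_Dl {n i k : ℕ} (h : i ≤ k) :
    gen n i * Dl n k = gp n (List.range (k+1)) := by
  rw [Dl_expand, Finset.mul_sum]
  rw [Finset.sum_eq_single i]
  · rw [mul_smul_comm, Ql, gp_append, ← mul_assoc, gen_mul_gp]
    rw [List.length_range, smul_mul_assoc, smul_smul, ← mul_pow]
    simp only [neg_mul_neg, one_mul, one_pow, one_smul]
    have e1 : gp n (List.range i) * gen n i = gp n (List.range (i+1)) := by
      rw [range_succ_eq, gp_append]; simp [gp]
    have e2 : List.range (i+1) ++ (List.range (k-i)).map (fun j => i+1+j)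
        = List.range (k+1) := by
      rw [show (k+1) = (i+1)+(k-i) from by omega]
      conv_rhs => rw [range_add_eq]
    rw [mul_assoc, ← mul_assoc, e1, ← gp_append, e2]
  · intro j hj hne
    have hji : i ∈ Ql j (k-j) := by
      rw [Ql, List.mem_append]
      rcases Nat.lt_or_ge i j with hc | hc
      · left; exact List.mem_range.mpr hc
      · right
        simp only [List.mem_map, List.mem_range]
        have hj' := Finset.mem_range.mp hj
        exact ⟨i-j-1, by omega, by omega⟩
    rw [mul_smul_comm, gen_mul_gp_of_mem hji, smul_zero]
  · intro hi
    exact absurd (Finset.mem_range.mpr (by omega)) hi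

/-- `π_s · (shifted Δ) = π_{s+k}` (core form). -/
lemma gpRange_mul_SDl (n s k : ℕ) :
    gp n (List.range (s+1)) * SDl n s k = gp n (List.range (s+k+1)) := by
  induction k with
  | zero => rw [SDl_zero, mul_one]
  | succ k ih =>
    rw [SDl_succ, ← mul_assoc, ih, mul_sub]
    have h0 : gp n (List.range (s+k+1)) * gen n (s+k) = 0 :=
      gp_mul_gen_of_mem (List.mem_range.mpr (by omega))
    have h1 : gp n (List.range (s+k+1)) * gen n (s+k+1) = gp n (List.range (s+k+1+1)) := by
      conv_rhs => rw [range_succ_eq]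
      rw [gp_append]; simp [gp]
    rw [h0, h1, sub_zero]
    rfl

/-- `Δ_p · (shifted Δ_q) = Δ_{p+q}` (core form). -/
lemma Dl_mul_SDl (n p q : ℕ) : Dl n p * SDl n p q = Dl n (p+q) := by
  induction q with
  | zero => rw [SDl_zero, mul_one]; rfl
  | succ q ih =>
    rw [SDl_succ, ← mul_assoc, ih, ← Dl_succ]
    rfl

/-- `π_p · (shifted π_q) = 0` (core form). -/
lemma gpRange_mul_shifted_pi (n p q : ℕ) :
    gp n (List.range (p+1)) * gp n ((List.range (q+1)).map (fun j => p+j)) = 0 := by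
  have e : (List.range (q+1)).map (fun j => p+j)
      = p :: (List.range q).map (fun j => p+(j+1)) := by
    simp [List.range_succ_eq_map, List.map_map, Function.comp_def]
  rw [e, gp_cons, ← mul_assoc]
  rw [gp_mul_gen_of_mem (List.mem_range.mpr (by omega)), zero_mul]


/-! ### Bridge lemmas -/

lemma eps_eq_gen (n : ℕ) (i : Fin (n+1)) : eps n i = gen n i.1 := by
  unfold eps gen
  congr 1
  funext t
  rw [Pi.single_apply]
  simp [Fin.ext_iff]

lemma map_coe_finRange' (n : ℕ) :
    (List.finRange n).map (fun i : Fin n => (i : ℕ)) = List.range n :=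
  List.ext_getElem (by simp) (by simp)

lemma Delta_eq (n : ℕ) : Delta n = Dl n n := by
  unfold Delta Dl
  rw [← map_coe_finRange', List.map_map]
  congr 1
  refine List.map_congr_left fun i _ => ?_
  simp [Function.comp, eps_eq_gen]

lemma piTop_eq (n : ℕ) : piTop n = gp n (List.range (n+1)) := by
  unfold piTop gp
  rw [← map_coe_finRange', List.map_map]
  congr 1
  refine List.map_congr_left fun i _ => ?_
  simp [Function.comp, eps_eq_gen]

lemma genMap_eps {a b : ℕ} (g : Fin (a + 1) → Fin (b + 1)) (i : Fin (a+1)) :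
    genMap g (eps a i) = eps b (g i) := by
  unfold genMap eps
  rw [ExteriorAlgebra.lift_ι_apply, LinearMap.comp_apply]
  refine congrArg (ExteriorAlgebra.ι ℝ) ?_
  simp only [LinearMap.coe_comp, Function.comp_apply, LinearMap.coe_sum, Finset.sum_apply,
    LinearMap.proj_apply, LinearMap.single_apply]
  rw [Finset.sum_eq_single i]
  · rw [Pi.single_eq_same]
  · intro t _ ht
    rw [Pi.single_eq_of_ne ht, Pi.single_zero]
  · intro h; simp at h

lemma gen_eq_eps {n j : ℕ} (h : j ≤ n) : gen n j = eps n ⟨j, by omega⟩ := by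
  rw [eps_eq_gen]

lemma dcoface_gen {n j : ℕ} (i : Fin (n+2)) (h : j ≤ n) :
    dcoface n i (gen n j) = gen (n+1) (if j < i.1 then j else j+1) := by
  rw [gen_eq_eps h, dcoface, genMap_eps, eps_eq_gen]
  congr 1
  simp only [Fin.succAbove, Fin.lt_def, Fin.coe_castSucc]
  split_ifs with hc <;> simp

lemma dcoface_gp {n : ℕ} (i : Fin (n+2)) {l : List ℕ} (h : ∀ j ∈ l, j ≤ n) :
    dcoface n i (gp n l) = gp (n+1) (l.map (fun j => if j < i.1 then j else j+1)) := by
  induction l with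
  | nil => simp [map_one]
  | cons a l ih =>
    rw [gp_cons, map_mul, dcoface_gen i (h a List.mem_cons_self),
      ih (fun j hj => h j (List.mem_cons_of_mem a hj)), List.map_cons, gp_cons]

lemma dcoface_Dl {n p : ℕ} (i : Fin (n+2)) (hi : p < i.1) (hp : p ≤ n) :
    dcoface n i (Dl n p) = Dl (n+1) p := by
  unfold Dl
  rw [map_list_prod, List.map_map]
  congr 1
  refine List.map_congr_left fun j hj => ?_
  have hjp : j < p := List.mem_range.mp hj
  simp only [Function.comp_apply]
  rw [map_sub, dcoface_gen i (by omega), dcoface_gen i (by omega),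
    if_pos (by omega), if_pos (by omega)]

lemma dcoface_SDl0 {n s k : ℕ} (i : Fin (n+2)) (hi : i.1 = 0) (hk : s+k ≤ n) :
    dcoface n i (SDl n s k) = SDl (n+1) (s+1) k := by
  unfold SDl
  rw [map_list_prod, List.map_map]
  congr 1
  refine List.map_congr_left fun j hj => ?_
  have hjk : j < k := List.mem_range.mp hj
  simp only [Function.comp_apply]
  rw [map_sub, dcoface_gen i (by omega), dcoface_gen i (by omega),
    if_neg (by omega), if_neg (by omega),
    show s+1+j+1 = s+j+1+1 from by omega, show s+1+j = s+j+1 from by omega]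

lemma dcoface_gp0 {n : ℕ} (i : Fin (n+2)) (hi : i.1 = 0) {l : List ℕ}
    (h : ∀ j ∈ l, j ≤ n) :
    dcoface n i (gp n l) = gp (n+1) (l.map (fun j => j+1)) := by
  rw [dcoface_gp i h]
  congr 1
  refine List.map_congr_left fun j _ => ?_
  rw [if_neg (by omega)]

lemma dcoface_gp_fix {n : ℕ} (i : Fin (n+2)) {l : List ℕ} (h : ∀ j ∈ l, j < i.1)
    (h2 : ∀ j ∈ l, j ≤ n) : dcoface n i (gp n l) = gp (n+1) l := by
  rw [dcoface_gp i h2]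
  congr 1
  calc l.map (fun j => if j < i.1 then j else j+1)
      = l.map id := List.map_congr_left (fun j hj => if_pos (h j hj))
    _ = l := List.map_id l

lemma dIter_high_Dl (p q : ℕ) : dIter (p+1) p q (Dl p p) = Dl (p+q) p := by
  induction q with
  | zero => rfl
  | succ q ih =>
    simp only [dIter]
    rw [ih, dcoface_Dl _ (show p < min (p+1) (p+q+1) by omega) (by omega)]
    rfl

lemma dIter_high_gp (p q : ℕ) {l : List ℕ} (h : ∀ j ∈ l, j ≤ p) :
    dIter (p+1) p q (gp p l) = gp (p+q) l := by
  induction q with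
  | zero => rfl
  | succ q ih =>
    simp only [dIter]
    rw [ih, dcoface_gp_fix _ (fun j hj => show j < min (p+1) (p+q+1) by
        have := h j hj; omega) (fun j hj => by have := h j hj; omega)]
    rfl

lemma dIter_zero_SDl (q p : ℕ) : dIter 0 q p (SDl q 0 q) = SDl (q+p) p q := by
  induction p with
  | zero => rfl
  | succ p ih =>
    simp only [dIter]
    rw [ih, dcoface_SDl0 _ (show min 0 (q+p+1) = 0 by omega) (by omega)]
    rfl

lemma dIter_zero_gp (q p : ℕ) {l : List ℕ} (h : ∀ j ∈ l, j ≤ q) :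
    dIter 0 q p (gp q l) = gp (q+p) (l.map (fun j => p+j)) := by
  induction p with
  | zero =>
    show gp q l = _
    congr 1
    conv_lhs => rw [← List.map_id l]
    refine List.map_congr_left fun j _ => (Nat.zero_add j).symm
  | succ p ih =>
    simp only [dIter]
    rw [ih, dcoface_gp0 _ (show min 0 (q+p+1) = 0 by omega) (fun j hj => by
      rcases List.mem_map.mp hj with ⟨t, ht, rfl⟩
      have := h t ht; omega), List.map_map]
    congr 1
    refine List.map_congr_left fun j _ => ?_
    simp only [Function.comp_apply]
    omega

lemma lcast_SDl {a b : ℕ} (h : a = b) (s k : ℕ) : lcast h (SDl a s k) = SDl b s k := by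
  subst h; rfl

lemma lcast_gp {a b : ℕ} (h : a = b) (l : List ℕ) : lcast h (gp a l) = gp b l := by
  subst h; rfl

lemma map_if_Ql (i k : ℕ) :
    (List.range (i+k)).map (fun j => if j < i then j else j+1) = Ql i k := by
  rw [range_add_eq, List.map_append, List.map_map, Ql]
  congr 1
  · calc (List.range i).map (fun j => if j < i then j else j+1)
        = (List.range i).map id :=
          List.map_congr_left (fun j hj => if_pos (List.mem_range.mp hj))
      _ = List.range i := List.map_id _
  · refine List.map_congr_left fun j _ => ?_
    simp only [Function.comp_apply]
    rw [if_neg (by omega)]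
    omega

lemma dco_pi (m i : ℕ) (f : Fin (m+2)) (hf : f.1 = i) (him : i ≤ m+1) :
    dcoface m f (piTop m) = gp (m+1) (Ql i (m+1-i)) := by
  rw [piTop_eq, dcoface_gp _ (fun j hj => by have := List.mem_range.mp hj; omega)]
  congr 1
  rw [hf]
  conv_lhs => rw [show m+1 = i + (m+1-i) from by omega]
  exact map_if_Ql i (m+1-i)


/-- The structure relations: (1) `ε_i Δ_n = π_n`;
(2) `Σ_{i=0}^n (-1)^i d^i(π_{n-1}) = Δ_n`; (3) `Δ_p ∪ Δ_q = Δ_{p+q}`;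
(4) `π_p ∪ Δ_q = π_{p+q}`; (5) `π_p ∪ π_q = 0`. -/
theorem stmt_18 :
    (∀ (n : ℕ) (i : Fin (n + 1)), eps n i * Delta n = piTop n) ∧
    (∀ m : ℕ, (∑ i ∈ Finset.range (m + 2),
        ((-1 : ℤ) ^ i) • dcoface m ⟨min i (m + 1), by omega⟩ (piTop m)) = Delta (m + 1)) ∧
    (∀ p q : ℕ, cup p q (Delta p) (Delta q) = Delta (p + q)) ∧
    (∀ p q : ℕ, cup p q (piTop p) (Delta q) = piTop (p + q)) ∧
    (∀ p q : ℕ, cup p q (piTop p) (piTop q) = 0) := by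
  refine ⟨?_, ?_, ?_, ?_, ?_⟩
  · intro n i
    rw [eps_eq_gen, Delta_eq, piTop_eq]
    exact gen_mul_Dl (by omega)
  · intro m
    rw [Delta_eq, Dl_expand]
    refine Finset.sum_congr rfl fun i hi => ?_
    have him : i ≤ m+1 := by have := Finset.mem_range.mp hi; omega
    rw [dco_pi m i _ (show min i (m+1) = i by omega) him]
    rw [← Int.cast_smul_eq_zsmul ℝ]
    push_cast
    rfl
  · intro p q
    unfold cup
    rw [Delta_eq p, Delta_eq q, Delta_eq (p+q), Dl_eq_SDl q q, dIter_high_Dl,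
      dIter_zero_SDl, lcast_SDl, Dl_mul_SDl]
  · intro p q
    unfold cup
    rw [piTop_eq p, piTop_eq (p+q), Delta_eq q, Dl_eq_SDl q q,
      dIter_high_gp p q (fun j hj => by have := List.mem_range.mp hj; omega),
      dIter_zero_SDl, lcast_SDl]
    exact gpRange_mul_SDl (p+q) p q
  · intro p q
    unfold cup
    rw [piTop_eq p, piTop_eq q,
      dIter_high_gp p q (fun j hj => by have := List.mem_range.mp hj; omega),
      dIter_zero_gp q p (fun j hj => by have := List.mem_range.mp hj; omega),
      lcast_gp]
    exact gpRange_mul_shifted_pi (p+q) p q
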